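/- With the notation of the previous statement (κ ≥ 2, [n] = sin(nπ/κ)/sin(π/κ), μ(k,l) = [k+1][l+1][k+l+2]/[2], T↑, T↓ as given), for integers k ≥ 0, l ≥ 1 with k+l+3 < κ one has T↑(k,l)·T↓(k,l)/μ(k,l) = μ(k,l+1)·μ(k+1,l)·μ(k+1,l−1). -/

import Mathlib

/-- Quantum integer `[n] = sin(nπ/κ)/sin(π/κ)`. -/
noncomputable def qint (κ : ℕ) (n : ℕ) : ℝ :=
  Real.sin (n * Real.pi / κ) / Real.sin (Real.pi / κ)

/-- Quantum dimension `μ(k,l) = [k+1][l+1][k+l+2]/[2]`. -/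
noncomputable def quantumDim (κ k l : ℕ) : ℝ :=
  qint κ (k+1) * qint κ (l+1) * qint κ (k+l+2) / qint κ 2

/-- Squared cell modulus of a pointing-up triangle. -/
noncomputable def Tup (κ k l : ℕ) : ℝ :=
  qint κ (k+1) * qint κ (k+2) * qint κ (l+1) * qint κ (l+2) *
    qint κ (k+l+2) * qint κ (k+l+3) / (qint κ 2)^2

/-- Squared cell modulus of a pointing-down triangle. -/
noncomputable def Tdown (κ k l : ℕ) : ℝ :=
  qint κ (k+1) * qint κ (k+2) * qint κ l * qint κ (l+1) *
    qint κ (k+l+2) * qint κ (k+l+3) / (qint κ 2)^2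

lemma qint_pos (κ n : ℕ) (h1 : 1 ≤ n) (h2 : n < κ) : 0 < qint κ n := by
  have hκ0 : 0 < κ := by omega
  have hκ : (0:ℝ) < κ := by exact_mod_cast hκ0
  have hn1 : (1:ℝ) ≤ n := by exact_mod_cast h1
  have hnκ : (n:ℝ) < κ := by exact_mod_cast h2
  have hpi := Real.pi_pos
  apply div_pos
  · apply Real.sin_pos_of_pos_of_lt_pi
    · positivity
    · rw [div_lt_iff₀ hκ]
      nlinarith
  · apply Real.sin_pos_of_pos_of_lt_pi
    · positivity
    · rw [div_lt_iff₀ hκ]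
      nlinarith [hn1.trans hnκ.le]

theorem typeII_single_deg_Ak (κ k l : ℕ) (hκ : 2 ≤ κ) (hl : 1 ≤ l)
    (h : k + l + 3 < κ) :
    Tup κ k l * Tdown κ k l / quantumDim κ k l =
      quantumDim κ k (l+1) * quantumDim κ (k+1) l * quantumDim κ (k+1) (l-1) := by
  obtain ⟨m, rfl⟩ : ∃ m, l = m + 1 := ⟨l - 1, (Nat.succ_pred_eq_of_pos hl).symm⟩
  have h2 : qint κ 2 ≠ 0 := (qint_pos κ 2 (by norm_num) (by omega)).ne'
  have hk1 : qint κ (k+1) ≠ 0 := (qint_pos κ (k+1) (by omega) (by omega)).ne'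
  have hm2 : qint κ (m+1+1) ≠ 0 := (qint_pos κ (m+1+1) (by omega) (by omega)).ne'
  have hkm : qint κ (k+(m+1)+2) ≠ 0 := (qint_pos κ (k+(m+1)+2) (by omega) (by omega)).ne'
  simp only [Tup, Tdown, quantumDim, Nat.add_sub_cancel]
  have a1 : k+(m+1+1)+2 = k+(m+1)+3 := by omega
  have a2 : k+1+(m+1)+2 = k+(m+1)+3 := by omega
  have a3 : k+1+m+2 = k+(m+1)+2 := by omega
  have a4 : m+1+1+1 = m+3 := by omega
  have a5 : k+1+1 = k+2 := by omega
  have a6 : m+1+2 = m+3 := by omega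
  rw [a1, a2, a3, a4, a5, a6]
  field_simp
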